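/- Let F_q be any finite field and let z ∈ SL(2, F_q) be a matrix with tr(z) ≠ 2 and tr(z) ≠ −2. Then z is a commutator: there exist x, y ∈ SL(2, F_q) such that [x, y] = x y x⁻¹ y⁻¹ = z. -/

import Mathlib

open Matrix
open scoped commutatorElement

private lemma sl2_comm_key {F : Type*} [Field F]
    (z : Matrix.SpecialLinearGroup (Fin 2) F)
    (X Y C u v : Matrix (Fin 2) (Fin 2) F)
    (hX : X.det = 1) (hY : Y.det = 1)
    (hC : X * Y = C * (Y * X))
    (huv : u * v = 1) (hvu : v * u = 1)
    (hu : u * C * v = (z : Matrix (Fin 2) (Fin 2) F)) :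
    ∃ x y : Matrix.SpecialLinearGroup (Fin 2) F, ⁅x, y⁆ = z := by
  have hdet : ∀ W : Matrix (Fin 2) (Fin 2) F, W.det = 1 → (u * W * v).det = 1 := by
    intro W hW
    rw [Matrix.det_mul, Matrix.det_mul, hW, mul_one, ← Matrix.det_mul, huv, Matrix.det_one]
  refine ⟨⟨u * X * v, hdet X hX⟩, ⟨u * Y * v, hdet Y hY⟩, ?_⟩
  have hxy : (⟨u * X * v, hdet X hX⟩ * ⟨u * Y * v, hdet Y hY⟩ :
      Matrix.SpecialLinearGroup (Fin 2) F)
      = z * (⟨u * Y * v, hdet Y hY⟩ * ⟨u * X * v, hdet X hX⟩ :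
      Matrix.SpecialLinearGroup (Fin 2) F) := by
    apply Subtype.ext
    show (u * X * v) * (u * Y * v) = (z : Matrix (Fin 2) (Fin 2) F) * ((u * Y * v) * (u * X * v))
    calc (u * X * v) * (u * Y * v)
        = u * (X * ((v * u) * Y)) * v := by noncomm_ring
      _ = u * (X * (1 * Y)) * v := by rw [hvu]
      _ = u * (X * Y) * v := by rw [one_mul]
      _ = u * (C * (Y * X)) * v := by rw [hC]
      _ = u * (C * ((v * u) * (Y * ((v * u) * X)))) * v := by rw [hvu, one_mul, one_mul]
      _ = (u * C * v) * ((u * Y * v) * (u * X * v)) := by noncomm_ring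
      _ = (z : Matrix (Fin 2) (Fin 2) F) * ((u * Y * v) * (u * X * v)) := by rw [hu]
  refine (commutatorElement_def _ _).trans ?_
  have key : ∀ a b : Matrix.SpecialLinearGroup (Fin 2) F, a * b = z * (b * a) →
      a * b * a⁻¹ * b⁻¹ = z := by
    intro a b h
    rw [h]
    group
  exact key _ _ hxy

private lemma sl2_conj_companion {F : Type*} [Field F]
    (M : Matrix (Fin 2) (Fin 2) F) (hdet : M.det = 1)
    (hns : M 1 0 ≠ 0 ∨ M 0 1 ≠ 0 ∨ M 0 0 ≠ M 1 1) :
    ∃ g gi : Matrix (Fin 2) (Fin 2) F, g * gi = 1 ∧ gi * g = 1 ∧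
      gi * M * g = !![0, -1; 1, M 0 0 + M 1 1] := by
  have hd : M 0 0 * M 1 1 - M 0 1 * M 1 0 = 1 := by rw [← Matrix.det_fin_two]; exact hdet
  by_cases h10 : M 1 0 ≠ 0
  · refine ⟨!![1, M 0 0; 0, M 1 0], !![1, -(M 0 0) * (M 1 0)⁻¹; 0, (M 1 0)⁻¹], ?_, ?_, ?_⟩
    · ext i j
      fin_cases i <;> fin_cases j <;>
        simp [Matrix.mul_apply, Fin.sum_univ_two, Matrix.one_apply] <;> (try field_simp) <;> (try ring1)
    · ext i j
      fin_cases i <;> fin_cases j <;>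
        simp [Matrix.mul_apply, Fin.sum_univ_two, Matrix.one_apply] <;> (try field_simp) <;> (try ring1)
    · have hMg : M * !![1, M 0 0; 0, M 1 0]
          = !![1, M 0 0; 0, M 1 0] * !![0, -1; 1, M 0 0 + M 1 1] := by
        ext i j
        fin_cases i <;> fin_cases j <;>
          simp [Matrix.mul_apply, Fin.sum_univ_two] <;> (first | ring1 | linear_combination hd | linear_combination -hd | linear_combination 2*hd | linear_combination -2*hd | linear_combination -hd - M 0 1 * h10 | linear_combination -hd - M 1 0 * h01 | linear_combination hd + M 0 1 * h10 | linear_combination hd + M 1 0 * h01 | field_simp)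
      rw [Matrix.mul_assoc, hMg, ← Matrix.mul_assoc]
      have : !![1, -(M 0 0) * (M 1 0)⁻¹; 0, (M 1 0)⁻¹] * !![1, M 0 0; 0, M 1 0]
          = (1 : Matrix (Fin 2) (Fin 2) F) := by
        ext i j
        fin_cases i <;> fin_cases j <;>
          simp [Matrix.mul_apply, Fin.sum_univ_two, Matrix.one_apply] <;> (try field_simp) <;> (try ring1)
      rw [this, one_mul]
  · push_neg at h10
    by_cases h01 : M 0 1 ≠ 0
    · refine ⟨!![0, M 0 1; 1, M 1 1], !![-(M 1 1) * (M 0 1)⁻¹, 1; (M 0 1)⁻¹, 0], ?_, ?_, ?_⟩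
      · ext i j
        fin_cases i <;> fin_cases j <;>
          simp [Matrix.mul_apply, Fin.sum_univ_two, Matrix.one_apply] <;> (try field_simp) <;> (try ring1)
      · ext i j
        fin_cases i <;> fin_cases j <;>
          simp [Matrix.mul_apply, Fin.sum_univ_two, Matrix.one_apply] <;> (try field_simp) <;> (try ring1)
      · have hMg : M * !![0, M 0 1; 1, M 1 1]
            = !![0, M 0 1; 1, M 1 1] * !![0, -1; 1, M 0 0 + M 1 1] := by
          ext i j
          fin_cases i <;> fin_cases j <;>
            simp [Matrix.mul_apply, Fin.sum_univ_two, h10] <;> (first | ring1 | linear_combination hd | linear_combination -hd | linear_combination 2*hd | linear_combination -2*hd | linear_combination -hd - M 0 1 * h10 | linear_combination -hd - M 1 0 * h01 | linear_combination hd + M 0 1 * h10 | linear_combination hd + M 1 0 * h01 | field_simp)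
        rw [Matrix.mul_assoc, hMg, ← Matrix.mul_assoc]
        have : !![-(M 1 1) * (M 0 1)⁻¹, 1; (M 0 1)⁻¹, 0] * !![0, M 0 1; 1, M 1 1]
            = (1 : Matrix (Fin 2) (Fin 2) F) := by
          ext i j
          fin_cases i <;> fin_cases j <;>
            simp [Matrix.mul_apply, Fin.sum_univ_two, Matrix.one_apply] <;> (try field_simp) <;> (try ring1)
        rw [this, one_mul]
    · push_neg at h01
      have hne : M 0 0 ≠ M 1 1 := by
        rcases hns with h | h | h
        · exact absurd h10 h
        · exact absurd h01 h
        · exact h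
      have hsub : M 1 1 - M 0 0 ≠ 0 := sub_ne_zero.2 (Ne.symm hne)
      refine ⟨!![1, M 0 0; 1, M 1 1],
        !![M 1 1 * (M 1 1 - M 0 0)⁻¹, -(M 0 0) * (M 1 1 - M 0 0)⁻¹;
           -(M 1 1 - M 0 0)⁻¹, (M 1 1 - M 0 0)⁻¹], ?_, ?_, ?_⟩
      · ext i j
        fin_cases i <;> fin_cases j <;>
          simp [Matrix.mul_apply, Fin.sum_univ_two, Matrix.one_apply] <;>
          (try field_simp) <;> (try ring1)
      · ext i j
        fin_cases i <;> fin_cases j <;>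
          simp [Matrix.mul_apply, Fin.sum_univ_two, Matrix.one_apply] <;>
          (try field_simp) <;> (try ring1)
      · have hMg : M * !![1, M 0 0; 1, M 1 1]
            = !![1, M 0 0; 1, M 1 1] * !![0, -1; 1, M 0 0 + M 1 1] := by
          ext i j
          fin_cases i <;> fin_cases j <;>
            simp [Matrix.mul_apply, Fin.sum_univ_two, h10, h01] <;> (first | ring1 | linear_combination hd | linear_combination -hd | linear_combination 2*hd | linear_combination -2*hd | linear_combination -hd - M 0 1 * h10 | linear_combination -hd - M 1 0 * h01 | linear_combination hd + M 0 1 * h10 | linear_combination hd + M 1 0 * h01 | field_simp)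
        rw [Matrix.mul_assoc, hMg, ← Matrix.mul_assoc]
        have : !![M 1 1 * (M 1 1 - M 0 0)⁻¹, -(M 0 0) * (M 1 1 - M 0 0)⁻¹;
           -(M 1 1 - M 0 0)⁻¹, (M 1 1 - M 0 0)⁻¹] * !![1, M 0 0; 1, M 1 1]
            = (1 : Matrix (Fin 2) (Fin 2) F) := by
          ext i j
          fin_cases i <;> fin_cases j <;>
            simp [Matrix.mul_apply, Fin.sum_univ_two, Matrix.one_apply] <;>
            (try field_simp) <;> (try ring1)
        rw [this, one_mul]

/-- Over any finite field, every element of `SL(2, F_q)` whose trace is neither `2`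
nor `−2` is a commutator. -/
theorem stmt13 (F : Type*) [Field F] [Fintype F]
    (z : Matrix.SpecialLinearGroup (Fin 2) F)
    (h2 : Matrix.trace (z : Matrix (Fin 2) (Fin 2) F) ≠ 2)
    (h2' : Matrix.trace (z : Matrix (Fin 2) (Fin 2) F) ≠ -2) :
    ∃ x y : Matrix.SpecialLinearGroup (Fin 2) F, ⁅x, y⁆ = z := by
  set Z : Matrix (Fin 2) (Fin 2) F := (z : Matrix (Fin 2) (Fin 2) F) with hZ
  have hzdet : Z.det = 1 := z.2
  have htr : Matrix.trace Z = Z 0 0 + Z 1 1 := Matrix.trace_fin_two Z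
  -- step 1 : find X, Y, C
  suffices h : ∃ X Y C : Matrix (Fin 2) (Fin 2) F, X.det = 1 ∧ Y.det = 1 ∧
      X * Y = C * (Y * X) ∧ C 0 1 ≠ 0 ∧ C 0 0 + C 1 1 = Matrix.trace Z by
    obtain ⟨X, Y, C, hX, hY, hC, hCns, hCtr⟩ := h
    have hCdet : C.det = 1 := by
      have h1 := congrArg Matrix.det hC
      rw [Matrix.det_mul, Matrix.det_mul, Matrix.det_mul, hX, hY, one_mul, mul_one] at h1
      rw [← h1]
    have hzns : Z 1 0 ≠ 0 ∨ Z 0 1 ≠ 0 ∨ Z 0 0 ≠ Z 1 1 := by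
      by_contra hcon
      push_neg at hcon
      obtain ⟨e1, e2, e3⟩ := hcon
      have hd : Z 0 0 * Z 1 1 - Z 0 1 * Z 1 0 = 1 := by
        rw [← Matrix.det_fin_two]; exact hzdet
      have hsq : (Z 0 0 - 1) * (Z 0 0 + 1) = 0 := by
        rw [e3] at hd ⊢
        linear_combination hd + Z 1 0 * e2
      rcases mul_eq_zero.1 hsq with h | h
      · apply h2
        have : Z 0 0 = 1 := by linear_combination h
        rw [htr, ← e3, this]; norm_num
      · apply h2'
        have : Z 0 0 = -1 := by linear_combination h
        rw [htr, ← e3, this]; norm_num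
    obtain ⟨gz, giz, hz1, hz2, hz3⟩ := sl2_conj_companion Z hzdet hzns
    obtain ⟨gc, gic, hc1, hc2, hc3⟩ := sl2_conj_companion C hCdet (Or.inr (Or.inl hCns))
    apply sl2_comm_key z X Y C (gz * gic) (gc * giz) hX hY hC
    · calc gz * gic * (gc * giz) = gz * ((gic * gc) * giz) := by noncomm_ring
        _ = 1 := by rw [hc2, one_mul, hz1]
    · calc gc * giz * (gz * gic) = gc * ((giz * gz) * gic) := by noncomm_ring
        _ = 1 := by rw [hz2, one_mul, hc1]
    · have hzc : gz * !![0, -1; 1, Z 0 0 + Z 1 1] * giz = Z := by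
        rw [← hz3]
        calc gz * (giz * Z * gz) * giz = (gz * giz) * Z * (gz * giz) := by noncomm_ring
          _ = Z := by rw [hz1, one_mul, mul_one]
      have hCA : !![(0:F), -1; 1, C 0 0 + C 1 1] = !![0, -1; 1, Z 0 0 + Z 1 1] := by
        rw [hCtr, htr]
      calc gz * gic * C * (gc * giz) = gz * ((gic * C * gc) * giz) := by noncomm_ring
        _ = gz * (!![0, -1; 1, C 0 0 + C 1 1] * giz) := by rw [hc3]
        _ = gz * !![0, -1; 1, Z 0 0 + Z 1 1] * giz := by rw [hCA, Matrix.mul_assoc]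
        _ = Z := hzc
  -- step 2 : construct X, Y, C
  by_cases hex : ∃ a : F, a ≠ 0 ∧ a * a ≠ 1
  · obtain ⟨a, ha, ha2⟩ := hex
    obtain ⟨b, hb⟩ : ∃ b : F, a * b = 1 := ⟨a⁻¹, mul_inv_cancel₀ ha⟩
    set t : F := Matrix.trace Z with htdef
    set u : F := a * a + b * b with hudef
    have h2u : 2 - u ≠ 0 := by
      intro h
      have hab : (a - b) * (a - b) = u - 2 := by
        rw [hudef]; linear_combination (-2 : F) * hb
      have hu2 : u - 2 = 0 := by linear_combination -h
      rw [hu2] at hab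
      have : a - b = 0 := mul_self_eq_zero.1 hab
      have hba : a = b := by linear_combination this
      apply ha2
      calc a * a = a * b := by rw [← hba]
        _ = 1 := hb
    obtain ⟨m, hm⟩ : ∃ m : F, m * (2 - u) = t - u :=
      ⟨(t - u) / (2 - u), div_mul_cancel₀ _ h2u⟩
    refine ⟨!![a, 0; 0, b], !![1, 1; m - 1, m],
      !![m - a * a * (m - 1), a * a - 1; m * (m - 1) * (b * b - 1), m - b * b * (m - 1)],
      ?_, ?_, ?_, ?_, ?_⟩
    · rw [Matrix.det_fin_two_of]; linear_combination hb
    · rw [Matrix.det_fin_two_of]; ring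
    · ext i j
      fin_cases i <;> fin_cases j <;>
        simp [Matrix.mul_apply, Fin.sum_univ_two] <;>
        (first | ring1 | linear_combination (-a) * hb | linear_combination (-(b * (m - 1))) * hb | linear_combination a * hb | linear_combination (b * (m - 1)) * hb)
    · show a * a - 1 ≠ 0
      exact sub_ne_zero.2 ha2
    · show (m - a * a * (m - 1)) + (m - b * b * (m - 1)) = Matrix.trace Z
      rw [← htdef]
      linear_combination hm + (m - 1) * hudef
  · push_neg at hex
    have hmem : ∀ x : F, x = 0 ∨ x = 1 ∨ x = -1 := by
      intro x
      by_cases hx : x = 0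
      · exact Or.inl hx
      · have hx2 : x * x = 1 := hex x hx
        have : (x - 1) * (x + 1) = 0 := by linear_combination hx2
        rcases mul_eq_zero.1 this with h | h
        · exact Or.inr (Or.inl (by linear_combination h))
        · exact Or.inr (Or.inr (by linear_combination h))
    set t : F := Matrix.trace Z with htdef
    by_cases hch : (2 : F) = 0
    · -- characteristic 2 : t = 1
      have ht1 : t = 1 := by
        rcases hmem t with h | h | h
        · exact absurd (by rw [h, ← hch]) h2
        · exact h
        · calc t = -1 := h
            _ = 1 := by linear_combination -hch
      refine ⟨!![1, 1; 0, 1], !![1, 0; 1, 1], !![1, 1; 1, 0], ?_, ?_, ?_, ?_, ?_⟩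
      · rw [Matrix.det_fin_two_of]; ring
      · rw [Matrix.det_fin_two_of]; ring
      · ext i j
        fin_cases i <;> fin_cases j <;>
          simp [Matrix.mul_apply, Fin.sum_univ_two] <;> linear_combination hch
      · show (1:F) ≠ 0
        exact one_ne_zero
      · calc (!![1, 1; 1, 0] : Matrix (Fin 2) (Fin 2) F) 0 0 + !![1, 1; 1, 0] 1 1
            = (1 : F) := by norm_num
          _ = t := ht1.symm
    · -- characteristic 3 : t = 0
      have h3 : (3 : F) = 0 := by
        rcases hmem 2 with h | h | h
        · exact absurd h hch
        · exact absurd (by linear_combination h) (one_ne_zero (α := F))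
        · linear_combination h
      have ht0 : t = 0 := by
        rcases hmem t with h | h | h
        · exact h
        · exact absurd (by rw [h]; linear_combination h3) h2'
        · exact absurd (by rw [h]; linear_combination -h3) h2
      refine ⟨!![1, 1; 0, 1], !![0, -1; 1, 0], !![2, 1; 1, 1], ?_, ?_, ?_, ?_, ?_⟩
      · rw [Matrix.det_fin_two_of]; ring
      · rw [Matrix.det_fin_two_of]; ring
      · ext i j
        fin_cases i <;> fin_cases j <;>
          simp [Matrix.mul_apply, Fin.sum_univ_two] <;> ring
      · show (1:F) ≠ 0
        exact one_ne_zero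
      · calc (!![2, 1; 1, 1] : Matrix (Fin 2) (Fin 2) F) 0 0 + !![2, 1; 1, 1] 1 1
            = (3 : F) := by norm_num
          _ = 0 := h3
          _ = t := ht0.symm
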